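/- Let R_+ be the linear operator on gl_n(ℂ) determined by ⟨R_+(η), ζ⟩ = ⟨r_{αβ}, η⊗ζ⟩_⊗ for all ζ. Then: (i) R_+(e_{ij}) = e_{ij} for all i < j with (i,j) ≠ (α,α+1), and R_+(e_{α,α+1}) = e_{α,α+1} + e_{β,β+1}; (ii) R_+(e_{ij}) = 0 for all i > j with (i,j) ≠ (β+1,β), and R_+(e_{β+1,β}) = −e_{α+1,α}; (iii) R_+ maps every diagonal matrix to a diagonal matrix, and R_+(Id) = 0. In particular R_+(η) equals the strictly upper triangular part of η plus a diagonal matrix depending linearly only on the diagonal of η, plus η_{α,α+1}·e_{β,β+1} − η_{β+1,β}·e_{α+1,α}. -/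

import Mathlib

open scoped BigOperators

noncomputable section

/-- The space of `n × n` complex matrices. -/
abbrev Mat (n : ℕ) := Matrix (Fin n) (Fin n) ℂ

/-- Polynomial functions on the space of `n × n` complex matrices. -/
abbrev PolyFn (n : ℕ) := MvPolynomial (Fin n × Fin n) ℂ

/-- The index of `Fin n` corresponding to the 1-based index `k ∈ [1,n]`. -/
def vIdx (n : ℕ) [NeZero n] (k : ℕ) : Fin n :=
  ⟨(k - 1) % n, Nat.mod_lt _ (Nat.pos_of_ne_zero (NeZero.ne n))⟩

namespace BD

variable (n : ℕ) [NeZero n]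

/-- 1-based entry of a matrix. -/
def entM (A : Mat n) (i j : ℕ) : ℂ := A (vIdx n i) (vIdx n j)

/-- 1-based matrix unit `e_{ij}`. -/
def matE (i j : ℕ) : Mat n := Matrix.single (vIdx n i) (vIdx n j) 1

/-- The trace form `⟨A,B⟩ = Tr(AB)`. -/
def trF (A B : Mat n) : ℂ := (A * B).trace

/-- `ĥ_i = (1/n)·diag(n−i,…,n−i,−i,…,−i)` (first `i` entries `n−i`). -/
def hhat (i : ℕ) : Mat n :=
  Matrix.diagonal fun k => if (k : ℕ) < i then ((n : ℂ) - i) / n else -(i : ℂ) / n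

/-- The contribution of a tensor summand `A ⊗ B` of an R-matrix to the operator `R_+`,
i.e. `η ↦ ⟨A,η⟩ • B`, since `⟨⟨A,η⟩ • B, ζ⟩ = ⟨A ⊗ B, η ⊗ ζ⟩_⊗`. -/
def tAp (A B η : Mat n) : Mat n := trF n A η • B

/-- The contribution of a wedge `A ∧ B = A⊗B − B⊗A` to `R_+`. -/
def wAp (A B η : Mat n) : Mat n := tAp n A B η - tAp n B A η

variable (a b : ℕ)

/-- The contribution of the diagonal part `r_0` to `R_+` (for the BD triple `α ↦ β`,
written `a ↦ b`). -/
def Rplus0 (η : Mat n) : Mat n :=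
  (∑ i ∈ Finset.Icc 1 (n - 1), tAp n (hhat n i) (hhat n i) η)
    - (∑ i ∈ Finset.Icc 1 (n - 2), tAp n (hhat n (i + 1)) (hhat n i) η)
    + (if b = a + 1 then
        wAp n (hhat n a) (hhat n b) η + wAp n (hhat n (b - 1)) (hhat n a) η
          + wAp n (hhat n b) (hhat n (a + 1)) η
      else 0)

/-- The operator `R_+` associated with the standard R-matrix
`r_std = r_0 + Σ_{i<j} e_{ji} ⊗ e_{ij}`. -/
def RplusStd (η : Mat n) : Mat n :=
  Rplus0 n a b η +
    ∑ i ∈ Finset.Icc 1 n, ∑ j ∈ Finset.Icc 1 n,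
      (if i < j then tAp n (matE n j i) (matE n i j) η else 0)

/-- The operator `R_+` associated with the R-matrix
`r_{αβ} = r_std + e_{α+1,α} ⊗ e_{β,β+1} − e_{β,β+1} ⊗ e_{α+1,α}`. -/
def RplusAB (η : Mat n) : Mat n :=
  RplusStd n a b η + tAp n (matE n (a + 1) a) (matE n b (b + 1)) η
    - tAp n (matE n b (b + 1)) (matE n (a + 1) a) η

/-- Evaluation of a polynomial function at a matrix `X`. -/
def evalM (X : Mat n) (f : PolyFn n) : ℂ :=
  MvPolynomial.eval (fun p => X p.1 p.2) f

/-- The gradient `∇f(X)` with respect to the trace form: `(∇f(X))_{ij} = ∂f/∂x_{ji}(X)`. -/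
def gradM (f : PolyFn n) (X : Mat n) : Mat n :=
  Matrix.of fun i j => evalM n X (MvPolynomial.pderiv (j, i) f)

/-- The Sklyanin bracket associated with the operator `R`. -/
def skly (R : Mat n → Mat n) (f g : PolyFn n) (X : Mat n) : ℂ :=
  trF n (R (gradM n f X * X)) (gradM n g X * X)
    - trF n (R (X * gradM n f X)) (X * gradM n g X)

/-- The standard Sklyanin bracket `{·,·}_std`. -/
def brStd (f g : PolyFn n) (X : Mat n) : ℂ := skly n (RplusStd n a b) f g X

/-- The Sklyanin bracket `{·,·}_{αβ}`. -/
def brAB (f g : PolyFn n) (X : Mat n) : ℂ := skly n (RplusAB n a b) f g X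

/-- `f^{i←j}(X) = (∇f(X)·X)_{ij}`. -/
def supArr (f : PolyFn n) (i j : ℕ) (X : Mat n) : ℂ := entM n (gradM n f X * X) i j

/-- `f_{i←j}(X) = (X·∇f(X))_{ji}`. -/
def subArr (f : PolyFn n) (i j : ℕ) (X : Mat n) : ℂ := entM n (X * gradM n f X) j i

/-- The coordinate function `x_{ij}` (1-based) as a polynomial. -/
def xC (i j : ℕ) : PolyFn n := MvPolynomial.X (vIdx n i, vIdx n j)

/-- The determinant of an `s × s` submatrix of the matrix of variables, with (1-based)
row indices `r 0, …, r (s-1)` and column indices `c 0, …, c (s-1)`. -/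
def subDet (s : ℕ) (r c : ℕ → ℕ) : PolyFn n :=
  Matrix.det (Matrix.of fun p q : Fin s =>
    (MvPolynomial.X (vIdx n (r p), vIdx n (c q)) : PolyFn n))

/-- The size of the maximal contiguous square submatrix with upper-left corner `(i,j)`. -/
def msize (i j : ℕ) : ℕ := n + 1 - max i j

/-- The minor `f_{ij} = det X_{[i, min(n,n+i−j)]}^{[j, min(n,n+j−i)]}`. -/
def fMin (i j : ℕ) : PolyFn n :=
  subDet n (msize n i j) (fun p => i + p) (fun q => j + q)

/-- `f_{ij}^{→}` : the minor `f_{ij}` with its last column replaced by the next column. -/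
def fMinR (i j : ℕ) : PolyFn n :=
  subDet n (msize n i j) (fun p => i + p)
    (fun q => if q + 1 = msize n i j then j + msize n i j else j + q)

/-- `f_{ij}^{←}` : the minor `f_{ij}` with its first column replaced by the previous column. -/
def fMinL (i j : ℕ) : PolyFn n :=
  subDet n (msize n i j) (fun p => i + p) (fun q => if q = 0 then j - 1 else j + q)

/-- `f_{ij}^{↓}` : the minor `f_{ij}` with its last row replaced by the next row. -/
def fMinD (i j : ℕ) : PolyFn n :=
  subDet n (msize n i j)
    (fun p => if p + 1 = msize n i j then i + msize n i j else i + p) (fun q => j + q)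

/-- `f_{ij}^{↑}` : the minor `f_{ij}` with its first row replaced by the previous row. -/
def fMinU (i j : ℕ) : PolyFn n :=
  subDet n (msize n i j) (fun p => if p = 0 then i - 1 else i + p) (fun q => j + q)

/-- `θ_k = f_{n+k−α,k}·f_{1,β+1} − f_{n+k−α,k}^{→}·f_{1,β+1}^{←}`. -/
def theta (k : ℕ) : PolyFn n :=
  fMin n (n + k - a) k * fMin n 1 (b + 1) - fMinR n (n + k - a) k * fMinL n 1 (b + 1)

/-- `ψ_m = f_{m,n+m−β}·f_{α+1,1} − f_{m,n+m−β}^{↓}·f_{α+1,1}^{↑}`. -/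
def psi (m : ℕ) : PolyFn n :=
  fMin n m (n + m - b) * fMin n (a + 1) 1 - fMinD n m (n + m - b) * fMinU n (a + 1) 1

/-- The initial cluster functions `φ_{ij}`. -/
def phi (i j : ℕ) : PolyFn n :=
  if 1 ≤ j ∧ j ≤ a ∧ i = n + j - a then theta n a b j
  else if 1 ≤ i ∧ i ≤ b ∧ j = n + i - b then psi n a b i
  else fMin n i j

end BD

namespace BD
set_option linter.unusedSectionVars false
variable (n : ℕ) [NeZero n]

lemma vIdx_val {k : ℕ} (h1 : 1 ≤ k) (h2 : k ≤ n) : ((vIdx n k : Fin n) : ℕ) = k - 1 :=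
  Nat.mod_eq_of_lt (by omega)

lemma vIdx_inj {i j : ℕ} (hi1 : 1 ≤ i) (hi2 : i ≤ n) (hj1 : 1 ≤ j) (hj2 : j ≤ n)
    (h : vIdx n i = vIdx n j) : i = j := by
  have := congrArg (Fin.val) h
  rw [vIdx_val n hi1 hi2, vIdx_val n hj1 hj2] at this
  omega

lemma vIdx_lt {i j : ℕ} (hi1 : 1 ≤ i) (hij : i < j) (hj2 : j ≤ n) :
    vIdx n i < vIdx n j := by
  rw [Fin.lt_def, vIdx_val n hi1 (by omega), vIdx_val n (by omega) hj2]
  omega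

lemma matE_apply (i j : ℕ) (k l : Fin n) :
    matE n i j k l = if vIdx n i = k ∧ vIdx n j = l then 1 else 0 := by
  simp [matE, Matrix.single]

lemma trF_matE (i j : ℕ) (η : Mat n) : trF n (matE n j i) η = entM n η i j := by
  simp only [trF, Matrix.trace, Matrix.diag, Matrix.mul_apply, matE_apply, entM]
  rw [Finset.sum_comm]
  simp [ite_and, Finset.sum_ite_eq', Finset.sum_ite_eq]

lemma trF_diagonal (f : Fin n → ℂ) (η : Mat n) :
    trF n (Matrix.diagonal f) η = ∑ k, f k * η k k := by
  simp [trF, Matrix.trace, Matrix.diag, Matrix.mul_apply, Matrix.diagonal_apply, ite_mul,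
    Finset.sum_ite_eq]

lemma trF_add (A x y : Mat n) : trF n A (x + y) = trF n A x + trF n A y := by
  simp [trF, mul_add]

lemma trF_smul (A : Mat n) (c : ℂ) (x : Mat n) : trF n A (c • x) = c * trF n A x := by
  simp [trF, Matrix.mul_smul, smul_eq_mul]

variable (a b : ℕ)

/-- `Rplus0` only depends on the diagonal of its argument. -/
lemma Rplus0_diag_dep (η : Mat n) :
    Rplus0 n a b η = Rplus0 n a b (Matrix.diagonal η.diag) := by
  simp [Rplus0, wAp, tAp, hhat, trF_diagonal, Matrix.diagonal_apply_eq, Matrix.diag]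

lemma Rplus0_isDiag (η : Mat n) : (Rplus0 n a b η).IsDiag := by
  intro k l hkl
  simp [Rplus0, wAp, tAp, hhat, Matrix.sum_apply, Matrix.sub_apply, Matrix.add_apply,
    Matrix.smul_apply, Matrix.diagonal_apply_ne _ hkl, apply_ite (f := fun M : Mat n => M k l)]

lemma Rplus0_add (x y : Mat n) :
    Rplus0 n a b (x + y) = Rplus0 n a b x + Rplus0 n a b y := by
  simp only [Rplus0, wAp, tAp, trF_add, add_smul, Finset.sum_add_distrib, smul_sub, sub_smul]
  split_ifs <;> abel

lemma Rplus0_smul (c : ℂ) (x : Mat n) :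
    Rplus0 n a b (c • x) = c • Rplus0 n a b x := by
  simp only [Rplus0, wAp, tAp, trF_smul, mul_smul, smul_sub, smul_add, Finset.smul_sum]
  split_ifs <;> [skip; simp] <;> module

/-- The diagonal output map. -/
def D0 (d : Fin n → ℂ) : Fin n → ℂ := (Rplus0 n a b (Matrix.diagonal d)).diag

lemma diagonal_add' (x y : Fin n → ℂ) :
    Matrix.diagonal (x + y) = Matrix.diagonal x + Matrix.diagonal y := by
  ext i j; by_cases h : i = j <;> simp [Matrix.diagonal_apply, h]

lemma diagonal_smul' (c : ℂ) (x : Fin n → ℂ) :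
    Matrix.diagonal (c • x) = c • Matrix.diagonal x := by
  ext i j; by_cases h : i = j <;> simp [Matrix.diagonal_apply, h]

lemma D0_linear : IsLinearMap ℂ (D0 n a b) := by
  constructor
  · intro x y
    unfold D0
    rw [diagonal_add', Rplus0_add]
    funext k; simp [Matrix.diag]
  · intro c x
    unfold D0
    rw [diagonal_smul', Rplus0_smul]
    funext k; simp [Matrix.diag]

lemma Rplus0_eq_diagonal (η : Mat n) :
    Rplus0 n a b η = Matrix.diagonal (D0 n a b η.diag) := by
  rw [Rplus0_diag_dep, D0, (Rplus0_isDiag n a b _).diagonal_diag]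

end BD

namespace BD
set_option linter.unusedSectionVars false
variable (n : ℕ) [NeZero n] (a b : ℕ)

lemma sum_upper (η : Mat n) :
    (∑ i ∈ Finset.Icc 1 n, ∑ j ∈ Finset.Icc 1 n,
      (if i < j then tAp n (matE n j i) (matE n i j) η else 0))
      = Matrix.of (fun k l => if k < l then η k l else 0) := by
  ext k l
  rw [Matrix.sum_apply]
  have hk : ((k : ℕ) + 1) ∈ Finset.Icc 1 n := by
    simp only [Finset.mem_Icc]; exact ⟨by omega, k.isLt⟩
  have hl : ((l : ℕ) + 1) ∈ Finset.Icc 1 n := by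
    simp only [Finset.mem_Icc]; exact ⟨by omega, l.isLt⟩
  rw [Finset.sum_eq_single_of_mem ((k : ℕ) + 1) hk ?_]
  · rw [Matrix.sum_apply, Finset.sum_eq_single_of_mem ((l : ℕ) + 1) hl ?_]
    · have hvk : vIdx n ((k : ℕ) + 1) = k := by
        apply Fin.ext; rw [vIdx_val n (by omega) (by omega)]; omega
      have hvl : vIdx n ((l : ℕ) + 1) = l := by
        apply Fin.ext; rw [vIdx_val n (by omega) (by omega)]; omega
      by_cases h : (k : ℕ) + 1 < (l : ℕ) + 1
      · have hkl : k < l := by rw [Fin.lt_def]; omega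
        simp [h, hkl, tAp, trF_matE, entM, matE_apply, hvk, hvl, Matrix.smul_apply]
      · have hkl : ¬ k < l := by rw [Fin.lt_def]; omega
        simp [h, hkl]
    · intro j hj hne
      split_ifs with hij
      · have : vIdx n j ≠ l := by
          simp only [Finset.mem_Icc] at hj
          intro hc
          have := congrArg Fin.val hc
          rw [vIdx_val n hj.1 hj.2] at this
          omega
        simp [tAp, matE_apply, Matrix.smul_apply, this]
      · rfl
  · intro i hi hne
    rw [Matrix.sum_apply]
    apply Finset.sum_eq_zero
    intro j hj
    split_ifs with hij
    · have : vIdx n i ≠ k := by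
        simp only [Finset.mem_Icc] at hi
        intro hc
        have := congrArg Fin.val hc
        rw [vIdx_val n hi.1 hi.2] at this
        omega
      simp [tAp, matE_apply, Matrix.smul_apply, this]
    · rfl

lemma trF_hhat_one {i : ℕ} (hi : i ≤ n) : trF n (hhat n i) 1 = 0 := by
  rw [hhat, trF_diagonal]
  simp only [Matrix.one_apply_eq, mul_one]
  rw [Fin.sum_univ_eq_sum_range (fun m => if m < i then ((n : ℂ) - i) / n else -(i : ℂ) / n)]
  rw [Finset.range_eq_Ico, ← Finset.sum_Ico_consecutive _ (Nat.zero_le i) hi]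
  rw [Finset.sum_ite_of_true, Finset.sum_ite_of_false]
  · rw [Finset.sum_const, Finset.sum_const, Nat.card_Ico, Nat.card_Ico]
    have hn : (n : ℂ) ≠ 0 := Nat.cast_ne_zero.mpr (NeZero.ne n)
    have hni : ((n - i : ℕ) : ℂ) = (n : ℂ) - i := by
      push_cast [Nat.cast_sub hi]; ring
    simp only [Nat.sub_zero, nsmul_eq_mul]
    rw [hni]
    field_simp
    ring
  · intro m hm; simp only [Finset.mem_Ico] at hm; omega
  · intro m hm; simp only [Finset.mem_Ico] at hm; omega

end BD

namespace BD
set_option linter.unusedSectionVars false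
variable (n : ℕ) [NeZero n] (a b : ℕ)

lemma Rplus0_one (ha : a ≤ n) (hb : b ≤ n) : Rplus0 n a b 1 = 0 := by
  have h1 : (∑ i ∈ Finset.Icc 1 (n - 1), tAp n (hhat n i) (hhat n i) (1 : Mat n)) = 0 :=
    Finset.sum_eq_zero fun i hi => by
      simp only [Finset.mem_Icc] at hi
      simp [tAp, trF_hhat_one n (show i ≤ n by omega)]
  have h2 : (∑ i ∈ Finset.Icc 1 (n - 2), tAp n (hhat n (i + 1)) (hhat n i) (1 : Mat n)) = 0 :=
    Finset.sum_eq_zero fun i hi => by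
      simp only [Finset.mem_Icc] at hi
      simp [tAp, trF_hhat_one n (show i + 1 ≤ n by omega)]
  rw [Rplus0, h1, h2]
  split_ifs with hba
  · simp [wAp, tAp, trF_hhat_one n ha, trF_hhat_one n hb,
      trF_hhat_one n (show b - 1 ≤ n by omega), trF_hhat_one n (show a + 1 ≤ n by omega)]
  · simp

lemma diagonal_zero' : Matrix.diagonal (0 : Fin n → ℂ) = 0 := by
  ext i j; by_cases h : i = j <;> simp [Matrix.diagonal_apply, h]

lemma diagonal_one' : Matrix.diagonal (1 : Fin n → ℂ) = 1 := by
  ext i j; by_cases h : i = j <;> simp [Matrix.diagonal_apply, Matrix.one_apply, h]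

lemma Rplus0_zero : Rplus0 n a b 0 = 0 := by
  have := Rplus0_smul n a b 0 0
  simpa using this

lemma D0_zero : D0 n a b 0 = 0 := by
  unfold D0
  have h0 : Matrix.diagonal (0 : Fin n → ℂ) = 0 := by
    ext i j; by_cases h : i = j <;> simp [Matrix.diagonal_apply, h]
  rw [h0, Rplus0_zero, Matrix.diag_zero]

/-- The master formula for `R_+` attached to `r_{αβ}`. -/
lemma RplusAB_formula (η : Mat n) :
    RplusAB n a b η =
      Matrix.of (fun k l => if k < l then η k l else 0)
        + Matrix.diagonal (D0 n a b η.diag)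
        + entM n η a (a + 1) • matE n b (b + 1)
        - entM n η (b + 1) b • matE n (a + 1) a := by
  rw [RplusAB, RplusStd, sum_upper, Rplus0_eq_diagonal]
  simp only [tAp, trF_matE]
  abel

lemma matE_entM (i j p q : ℕ) :
    entM n (matE n i j) p q = if vIdx n i = vIdx n p ∧ vIdx n j = vIdx n q then 1 else 0 := by
  simp [entM, matE_apply]

lemma diag_matE_ne {i j : ℕ} (h : vIdx n i ≠ vIdx n j) : (matE n i j).diag = 0 := by
  funext k
  simp only [Matrix.diag, matE_apply, Pi.zero_apply, ite_eq_right_iff, and_imp]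
  intro h1 h2
  exact absurd (h1.trans h2.symm) h

lemma upper_matE {i j : ℕ} (h1 : 1 ≤ i) (hij : i < j) (h2 : j ≤ n) :
    Matrix.of (fun k l => if k < l then matE n i j k l else 0) = matE n i j := by
  ext k l
  simp only [Matrix.of_apply]
  split_ifs with h
  · rfl
  · rw [matE_apply]
    split_ifs with hc
    · exact absurd (by rw [← hc.1, ← hc.2]; exact vIdx_lt n h1 hij h2) h
    · rfl

lemma upper_matE_lower {i j : ℕ} (h1 : 1 ≤ j) (hij : j < i) (h2 : i ≤ n) :
    Matrix.of (fun k l => if k < l then matE n i j k l else 0) = 0 := by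
  ext k l
  simp only [Matrix.of_apply, Matrix.zero_apply]
  split_ifs with h
  · rw [matE_apply]
    split_ifs with hc
    · exfalso
      have := vIdx_lt n h1 hij h2
      rw [hc.1, hc.2] at this
      exact absurd h (not_lt.mpr this.le)
    · rfl
  · rfl

end BD

open BD in
/-- description of the operator `R_+` for `r_{αβ}` on matrix units,
on diagonal matrices, and the resulting general formula. -/
theorem statement0 (n a b : ℕ) [NeZero n] (hn : 3 ≤ n) (ha : 1 ≤ a) (hab : a < b)
    (hb : b ≤ n - 1) :
    (∀ i j : ℕ, 1 ≤ i → i < j → j ≤ n → (i, j) ≠ (a, a + 1) →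
      RplusAB n a b (matE n i j) = matE n i j) ∧
    RplusAB n a b (matE n a (a + 1)) = matE n a (a + 1) + matE n b (b + 1) ∧
    (∀ i j : ℕ, 1 ≤ j → j < i → i ≤ n → (i, j) ≠ (b + 1, b) →
      RplusAB n a b (matE n i j) = 0) ∧
    RplusAB n a b (matE n (b + 1) b) = -matE n (a + 1) a ∧
    (∀ d : Fin n → ℂ, ∃ d' : Fin n → ℂ,
      RplusAB n a b (Matrix.diagonal d) = Matrix.diagonal d') ∧
    RplusAB n a b 1 = 0 ∧
    ∃ D : (Fin n → ℂ) → (Fin n → ℂ), IsLinearMap ℂ D ∧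
      ∀ η : Mat n, RplusAB n a b η =
        Matrix.of (fun k l => if k < l then η k l else 0)
          + Matrix.diagonal (D (Matrix.diag η))
          + entM n η a (a + 1) • matE n b (b + 1)
          - entM n η (b + 1) b • matE n (a + 1) a := by
  have hbn : b + 1 ≤ n := by omega
  have han : a + 1 ≤ n := by omega
  have hvab : vIdx n a ≠ vIdx n (a + 1) := (vIdx_lt n ha (by omega) han).ne
  have hvb : vIdx n b ≠ vIdx n (b + 1) := (vIdx_lt n (by omega) (by omega) hbn).ne
  refine ⟨?_, ?_, ?_, ?_, ?_, ?_, D0 n a b, D0_linear n a b, RplusAB_formula n a b⟩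
  · -- (i) upper units other than (a, a+1)
    intro i j hi hij hj hne
    have hvij : vIdx n i ≠ vIdx n j := (vIdx_lt n hi hij hj).ne
    rw [RplusAB_formula, upper_matE n hi hij hj, diag_matE_ne n hvij, D0_zero]
    have e1 : entM n (matE n i j) a (a + 1) = 0 := by
      rw [matE_entM]
      split_ifs with hc
      · exact absurd (Prod.ext (vIdx_inj n hi (by omega) ha (by omega) hc.1)
          (vIdx_inj n (by omega) hj (by omega) han hc.2)) hne
      · rfl
    have e2 : entM n (matE n i j) (b + 1) b = 0 := by
      rw [matE_entM]
      split_ifs with hc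
      · have h1 := vIdx_inj n hi (by omega) (by omega) hbn hc.1
        have h2 := vIdx_inj n (by omega) hj (by omega) (by omega) hc.2
        omega
      · rfl
    rw [e1, e2]
    simp [diagonal_zero']
  · -- (ii) unit e_{a, a+1}
    rw [RplusAB_formula, upper_matE n ha (by omega) han, diag_matE_ne n hvab, D0_zero]
    have e1 : entM n (matE n a (a + 1)) a (a + 1) = 1 := by
      rw [matE_entM, if_pos ⟨rfl, rfl⟩]
    have e2 : entM n (matE n a (a + 1)) (b + 1) b = 0 := by
      rw [matE_entM]
      split_ifs with hc
      · have h1 := vIdx_inj n ha (by omega) (by omega) hbn hc.1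
        omega
      · rfl
    rw [e1, e2]
    simp [diagonal_zero']
  · -- (iii) lower units other than (b+1, b)
    intro i j hj hji hi hne
    have hvij : vIdx n j ≠ vIdx n i := (vIdx_lt n hj hji hi).ne
    rw [RplusAB_formula, upper_matE_lower n hj hji hi, diag_matE_ne n (Ne.symm hvij), D0_zero]
    have e1 : entM n (matE n i j) a (a + 1) = 0 := by
      rw [matE_entM]
      split_ifs with hc
      · have h1 := vIdx_inj n (by omega) hi ha (by omega) hc.1
        have h2 := vIdx_inj n hj (by omega) (by omega) han hc.2
        omega
      · rfl
    have e2 : entM n (matE n i j) (b + 1) b = 0 := by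
      rw [matE_entM]
      split_ifs with hc
      · exact absurd (Prod.ext (vIdx_inj n (by omega) hi (by omega) hbn hc.1)
          (vIdx_inj n hj (by omega) (by omega) (by omega) hc.2)) hne
      · rfl
    rw [e1, e2]
    simp [diagonal_zero']
  · -- (iv) unit e_{b+1, b}
    rw [RplusAB_formula, upper_matE_lower n (by omega) (by omega) hbn,
      diag_matE_ne n (Ne.symm hvb), D0_zero]
    have e1 : entM n (matE n (b + 1) b) a (a + 1) = 0 := by
      rw [matE_entM]
      split_ifs with hc
      · have h1 := vIdx_inj n (by omega) hbn ha (by omega) hc.1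
        omega
      · rfl
    have e2 : entM n (matE n (b + 1) b) (b + 1) b = 1 := by
      rw [matE_entM, if_pos ⟨rfl, rfl⟩]
    rw [e1, e2]
    simp [diagonal_zero']
  · -- (v) diagonal matrices
    intro d
    refine ⟨D0 n a b d, ?_⟩
    rw [RplusAB_formula]
    have e0 : Matrix.of (fun k l => if k < l then Matrix.diagonal d k l else 0)
        = (0 : Mat n) := by
      ext k l
      simp only [Matrix.of_apply, Matrix.zero_apply]
      split_ifs with h
      · exact Matrix.diagonal_apply_ne d h.ne
      · rfl
    have e1 : entM n (Matrix.diagonal d) a (a + 1) = 0 :=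
      Matrix.diagonal_apply_ne d hvab
    have e2 : entM n (Matrix.diagonal d) (b + 1) b = 0 :=
      Matrix.diagonal_apply_ne d (Ne.symm hvb)
    rw [e0, e1, e2, Matrix.diag_diagonal]
    simp
  · -- (vi) identity
    rw [RplusAB_formula]
    have e0 : Matrix.of (fun k l => if k < l then (1 : Mat n) k l else 0) = (0 : Mat n) := by
      ext k l
      simp only [Matrix.of_apply, Matrix.zero_apply]
      split_ifs with h
      · exact Matrix.one_apply_ne h.ne
      · rfl
    have e1 : entM n (1 : Mat n) a (a + 1) = 0 := Matrix.one_apply_ne hvab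
    have e2 : entM n (1 : Mat n) (b + 1) b = 0 := Matrix.one_apply_ne (Ne.symm hvb)
    have e3 : D0 n a b (Matrix.diag (1 : Mat n)) = 0 := by
      unfold D0
      rw [show Matrix.diagonal (Matrix.diag (1 : Mat n)) = (1 : Mat n) by
        rw [Matrix.diag_one, diagonal_one']]
      rw [Rplus0_one n a b (by omega) (by omega), Matrix.diag_zero]
    rw [e0, e1, e2, e3]
    simp [diagonal_zero']
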